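/- arXiv:2509.04978 — 2 statements merged into one kernel-verified Lean document; each statement's English description precedes it below -/
import Mathlib

section
/- Let Λ be a Hopf R-order in K[G] with dual order A. Then ε_A(I(A))·Λ ⊆ R[G]; that is, for every x ∈ I(A) and every u ∈ Λ one has x(1_G)·u ∈ R[G]. -/
noncomputable section

open scoped BigOperators

section Core

variable (R : Type) [CommRing R] (K : Type) [Field K] [Algebra R K]
variable (G : Type) [Group G] [Fintype G] [DecidableEq G]

/-- The embedding of `K[G]` into the left factor of `K[G × G] ≅ K[G] ⊗_K K[G]`. -/
def incl1 (a : MonoidAlgebra K G) : MonoidAlgebra K (G × G) :=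
  MonoidAlgebra.ofCoeff (Finsupp.mapDomain (fun g => (g, (1 : G))) a.coeff)

/-- The embedding of `K[G]` into the right factor of `K[G × G] ≅ K[G] ⊗_K K[G]`. -/
def incl2 (a : MonoidAlgebra K G) : MonoidAlgebra K (G × G) :=
  MonoidAlgebra.ofCoeff (Finsupp.mapDomain (fun g => ((1 : G), g)) a.coeff)

/-- The comultiplication `Δ(g) = g ⊗ g` of `K[G]`, realized in `K[G × G] ≅ K[G] ⊗_K K[G]`. -/
def diagMap (u : MonoidAlgebra K G) : MonoidAlgebra K (G × G) :=
  MonoidAlgebra.ofCoeff (Finsupp.mapDomain (fun g : G => (g, g)) u.coeff)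

/-- The antipode `S(g) = g⁻¹` of `K[G]`. -/
def antipodeMap (u : MonoidAlgebra K G) : MonoidAlgebra K G :=
  MonoidAlgebra.ofCoeff (Finsupp.mapDomain (fun g : G => g⁻¹) u.coeff)

/-- A Hopf `R`-order `Λ` in `K[G]`: an `R`-subalgebra containing `R[G]`, finitely generated
as an `R`-module, spanning `K[G]` over `K`, with `Δ(Λ)` contained in the image of
`Λ ⊗_R Λ → K[G] ⊗_K K[G] ≅ K[G × G]`, `ε(Λ) ⊆ R` and `S(Λ) = Λ`. -/
structure IsHopfOrder (Λ : Subalgebra R (MonoidAlgebra K G)) : Prop where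
  grp_mem : ∀ g : G, MonoidAlgebra.of K G g ∈ Λ
  fg : Λ.toSubmodule.FG
  spans : Submodule.span K (Λ : Set (MonoidAlgebra K G)) = ⊤
  comul_mem : ∀ u ∈ Λ, diagMap K G u ∈ Submodule.span R
    {x : MonoidAlgebra K (G × G) | ∃ a ∈ Λ, ∃ b ∈ Λ, x = incl1 K G a * incl2 K G b}
  counit_mem : ∀ u ∈ Λ, (∑ g : G, u.coeff g) ∈ Set.range (algebraMap R K)
  antipode_mem : ∀ u ∈ Λ, antipodeMap K G u ∈ Λ

/-- The dual order `A` of `Λ`, inside `Map(G, K)`: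
`A = {f : G → K | ∑ u_g f(g) ∈ R for all ∑ u_g g ∈ Λ}`. -/
def dualOrder (Λ : Subalgebra R (MonoidAlgebra K G)) : Set (G → K) :=
  {f | ∀ u ∈ Λ, (∑ g : G, u.coeff g * f g) ∈ Set.range (algebraMap R K)}

/-- The action of `K[G]` on `Map(G, K)`: `(u·f)(h) = ∑_g u_g f(h g)`. -/
def actOn (u : MonoidAlgebra K G) (f : G → K) : G → K :=
  fun h => ∑ g : G, u.coeff g * f (h * g)

/-- The integrals `I(A)` of the dual order `A`:
`I(A) = {x ∈ A | a·x = a(1)·x for all a ∈ A}` (pointwise product). -/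
def integrals (Λ : Subalgebra R (MonoidAlgebra K G)) : Set (G → K) :=
  {x | x ∈ dualOrder R K G Λ ∧
    ∀ a ∈ dualOrder R K G Λ, ∀ h : G, a h * x h = a 1 * x h}

/-- `ε_A(I(A)) = {x(1) : x ∈ I(A)}`. -/
def epsIntegrals (Λ : Subalgebra R (MonoidAlgebra K G)) : Set K :=
  {y | ∃ x ∈ integrals R K G Λ, y = x 1}

end Core

lemma exists_denom
    (R : Type) [CommRing R] [IsDomain R]
    (K : Type) [Field K] [Algebra R K] [IsFractionRing R K]
    (G : Type) [Group G] [Fintype G] [DecidableEq G]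
    (Λ : Subalgebra R (MonoidAlgebra K G)) (hΛ : IsHopfOrder R K G Λ) :
    ∃ d : R, d ≠ 0 ∧ ∀ u ∈ Λ, ∀ h : G,
      algebraMap R K d * u.coeff h ∈ Set.range (algebraMap R K) := by
  obtain ⟨s, hs⟩ := hΛ.fg
  obtain ⟨b, hb⟩ := IsLocalization.exist_integer_multiples_of_finite
    (nonZeroDivisors R) (fun p : s × G => ((p.1 : MonoidAlgebra K G).coeff p.2 : K))
  refine ⟨(b : R), nonZeroDivisors.coe_ne_zero b, ?_⟩
  set M : Submodule R (MonoidAlgebra K G) :=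
    { carrier := {u | ∀ h : G, algebraMap R K (b : R) * u.coeff h ∈ Set.range (algebraMap R K)}
      add_mem' := by
        intro u v hu hv h
        obtain ⟨r, hr⟩ := hu h
        obtain ⟨t, ht⟩ := hv h
        exact ⟨r + t, by rw [map_add, MonoidAlgebra.coeff_add, Finsupp.add_apply, mul_add, ← hr, ← ht]⟩
      zero_mem' := fun h => ⟨0, by simp⟩
      smul_mem' := by
        intro c u hu h
        obtain ⟨r, hr⟩ := hu h
        refine ⟨c * r, ?_⟩
        rw [map_mul, hr, MonoidAlgebra.coeff_smul_apply, Algebra.smul_def]; ring }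
  have hle : Λ.toSubmodule ≤ M := by
    rw [← hs, Submodule.span_le]
    intro u hu h
    obtain ⟨r, hr⟩ := hb ⟨⟨u, hu⟩, h⟩
    exact ⟨r, by simpa [Algebra.smul_def] using hr⟩
  intro u hu h
  exact hle hu h

/-- For a Hopf `R`-order `Λ` in `K[G]` with dual order `A`, one has
`ε_A(I(A))·Λ ⊆ R[G]`: for every `x ∈ I(A)` and `u ∈ Λ`, the element `x(1)·u` of `K[G]`
has all its coefficients in `R`. -/
theorem statement1
    (R : Type) [CommRing R] [IsDomain R] [IsDedekindDomain R]
    (K : Type) [Field K] [Algebra R K] [IsFractionRing R K]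
    (G : Type) [Group G] [Fintype G] [DecidableEq G]
    (Λ : Subalgebra R (MonoidAlgebra K G)) (hΛ : IsHopfOrder R K G Λ) :
    ∀ x ∈ integrals R K G Λ, ∀ u ∈ Λ, ∀ g : G,
      x 1 * u.coeff g ∈ Set.range (algebraMap R K) := by
  intro x hx u hu g
  obtain ⟨d, hd0, hd⟩ := exists_denom R K G Λ hΛ
  have hdK : algebraMap R K d ≠ 0 :=
    (map_ne_zero_iff _ (IsFractionRing.injective R K)).mpr hd0
  have hx0 : ∀ h : G, h ≠ 1 → x h = 0 := by
    intro h hne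
    have ha : (fun g' : G => if g' = h then algebraMap R K d else 0)
        ∈ dualOrder R K G Λ := by
      intro v hv
      have := hd v hv h
      simpa [Finset.sum_ite_eq', mul_comm] using this
    have h2 := hx.2 _ ha h
    simp only [if_pos rfl, if_neg (Ne.symm hne), zero_mul] at h2
    exact (mul_eq_zero.mp h2).resolve_left hdK
  have hv : u * MonoidAlgebra.of K G g⁻¹ ∈ Λ := Λ.mul_mem hu (hΛ.grp_mem g⁻¹)
  have hsum := hx.1 _ hv
  have heq : ∑ g' : G, (u * MonoidAlgebra.of K G g⁻¹).coeff g' * x g' = u.coeff g * x 1 := by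
    rw [Finset.sum_eq_single 1]
    · simp [MonoidAlgebra.of_apply, MonoidAlgebra.coeff_mul_single_apply]
    · intro b _ hb; rw [hx0 b hb, mul_zero]
    · simp
  rw [heq] at hsum
  simpa [mul_comm] using hsum
end
end

section
/- Let k be a perfect field of characteristic p > 0 and let A be a finite-dimensional commutative Hopf k-algebra that is a local ring (so the finite k-group scheme Spec A is connected). Let B be a nonzero finite-dimensional commutative k-algebra equipped with a right A-comodule algebra structure ρ : B → B ⊗_k A (a k-algebra homomorphism satisfying (ρ ⊗ id)∘ρ = (id ⊗ Δ)∘ρ and (id ⊗ ε)∘ρ = id) such that the Galois map B ⊗_k B → B ⊗_k A, b ⊗ b' ↦ (b ⊗ 1)·ρ(b'), is bijective (i.e. Spec B is a torsor under Spec A over Spec k). Then there exists a k-algebra homomorphism B → k; consequently every such torsor is trivial, i.e. H¹(Spec k, Spec A) = 0. -/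
noncomputable section

open scoped TensorProduct

/-- The Galois map `B ⊗_k B → B ⊗_k A`, `b ⊗ b' ↦ (b ⊗ 1)·ρ(b')`, of an `A`-comodule
algebra `B`. -/
def galoisMap (k B A : Type) [CommRing k] [CommRing B] [CommRing A]
    [Algebra k B] [Algebra k A] (ρ : B →ₐ[k] B ⊗[k] A) :
    B ⊗[k] B →ₗ[k] B ⊗[k] A :=
  TensorProduct.lift (LinearMap.mk₂ k
    (fun b b' => (b ⊗ₜ[k] (1 : A)) * ρ b')
    (fun b₁ b₂ b' => by simp [TensorProduct.add_tmul, add_mul])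
    (fun c b b' => by beta_reduce; rw [show (c • b) ⊗ₜ[k] (1 : A) = c • (b ⊗ₜ[k] (1 : A)) from (TensorProduct.smul_tmul' c b 1).symm, smul_mul_assoc])
    (fun b b₁' b₂' => by simp [mul_add])
    (fun c b b' => by simp [mul_smul_comm]))

lemma galoisMap_tmul (k B A : Type) [CommRing k] [CommRing B] [CommRing A]
    [Algebra k B] [Algebra k A] (ρ : B →ₐ[k] B ⊗[k] A) (b b' : B) :
    galoisMap k B A ρ (b ⊗ₜ[k] b') = (b ⊗ₜ[k] (1 : A)) * ρ b' := rfl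

lemma galoisMap_mul (k B A : Type) [CommRing k] [CommRing B] [CommRing A]
    [Algebra k B] [Algebra k A] (ρ : B →ₐ[k] B ⊗[k] A) (x y : B ⊗[k] B) :
    galoisMap k B A ρ (x * y) = galoisMap k B A ρ x * galoisMap k B A ρ y := by
  induction x using TensorProduct.induction_on with
  | zero => simp
  | add x₁ x₂ h₁ h₂ => simp only [add_mul, map_add, h₁, h₂]
  | tmul b b' =>
    induction y using TensorProduct.induction_on with
    | zero => simp
    | add y₁ y₂ h₁ h₂ => simp only [mul_add, map_add, h₁, h₂]
    | tmul c c' =>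
      rw [Algebra.TensorProduct.tmul_mul_tmul, galoisMap_tmul, galoisMap_tmul,
        galoisMap_tmul, map_mul,
        show (b * c) ⊗ₜ[k] (1 : A) = (b ⊗ₜ[k] (1 : A)) * (c ⊗ₜ[k] (1 : A)) by
          rw [Algebra.TensorProduct.tmul_mul_tmul, mul_one]]
      ring

lemma galoisMap_pow (k B A : Type) [CommRing k] [CommRing B] [CommRing A]
    [Algebra k B] [Algebra k A] (ρ : B →ₐ[k] B ⊗[k] A) (x : B ⊗[k] B) (n : ℕ) :
    galoisMap k B A ρ (x ^ (n + 1)) = galoisMap k B A ρ x ^ (n + 1) := by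
  induction n with
  | zero => simp
  | succ n ih =>
    rw [pow_succ, galoisMap_mul, ih, ← pow_succ]

/-- Over a perfect field `k` of characteristic `p > 0`, let `A` be a
finite-dimensional commutative Hopf `k`-algebra which is a local ring (so `Spec A` is a
connected finite `k`-group scheme), and let `B` be a nonzero finite-dimensional commutative
`A`-comodule algebra whose Galois map `B ⊗_k B → B ⊗_k A` is bijective (a torsor under
`Spec A`).  Then there is a `k`-algebra homomorphism `B → k`; hence the torsor is trivial,
i.e. `H¹(Spec k, Spec A) = 0`. -/
theorem statement19
    (k : Type) [Field k] [PerfectField k] (p : ℕ) (hp : p.Prime) [CharP k p]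
    (A : Type) [CommRing A] [HopfAlgebra k A] [FiniteDimensional k A] [IsLocalRing A]
    (B : Type) [CommRing B] [Algebra k B] [Nontrivial B] [FiniteDimensional k B]
    (ρ : B →ₐ[k] B ⊗[k] A)
    (hcoassoc : ∀ b : B,
      LinearMap.rTensor A ρ.toLinearMap (ρ b) =
        (TensorProduct.assoc k B A A).symm
          (LinearMap.lTensor B (Coalgebra.comul (R := k) (A := A)) (ρ b)))
    (hcounit : ∀ b : B,
      TensorProduct.rid k B
        (LinearMap.lTensor B (Coalgebra.counit (R := k) (A := A)) (ρ b)) = b)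
    (hgalois : Function.Bijective (galoisMap k B A ρ)) :
    Nonempty (B →ₐ[k] k) := by
  classical
  set g := galoisMap k B A ρ with hgdef
  -- the "augmentation" map φ : B ⊗ A → B induced by the counit
  set φ : B ⊗[k] A →ₗ[k] B :=
    (TensorProduct.rid k B).toLinearMap ∘ₗ
      LinearMap.lTensor B (Coalgebra.counit (R := k) (A := A)) with hφdef
  have hφ_tmul : ∀ (b : B) (a : A),
      φ (b ⊗ₜ[k] a) = Coalgebra.counit (R := k) (A := A) a • b := by
    intro b a
    simp [hφdef, TensorProduct.rid_tmul]
  have hφ_mul_left : ∀ (b : B) (t : B ⊗[k] A), φ ((b ⊗ₜ[k] (1 : A)) * t) = b * φ t := by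
    intro b t
    induction t using TensorProduct.induction_on with
    | zero => simp
    | add t₁ t₂ h₁ h₂ => rw [mul_add, map_add, map_add, h₁, h₂, mul_add]
    | tmul c a =>
      rw [Algebra.TensorProduct.tmul_mul_tmul, one_mul, hφ_tmul, hφ_tmul, mul_smul_comm]
  have hmulpure : ∀ b b' : B, φ (g (b ⊗ₜ[k] b')) = b * b' := by
    intro b b'
    rw [hgdef, galoisMap_tmul, hφ_mul_left]
    have : φ (ρ b') = b' := by
      simpa [hφdef] using hcounit b'
    rw [this]
  -- counit is surjective
  have hsurjε : Function.Surjective (Coalgebra.counit (R := k) (A := A)) := by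
    intro c
    exact ⟨algebraMap k A c, by simp⟩
  -- the maximal ideal of A is nilpotent
  have hartk : IsArtinian k A := inferInstance
  have hAart : IsArtinianRing A := isArtinian_of_tower k inferInstance
  obtain ⟨N, hN⟩ := IsArtinianRing.isNilpotent_jacobson_bot (R := A)
  have hjac : Ideal.jacobson (⊥ : Ideal A) = IsLocalRing.maximalIdeal A :=
    IsLocalRing.jacobson_eq_maximalIdeal ⊥ bot_ne_top
  have hker : RingHom.ker (Bialgebra.counitAlgHom k A) = IsLocalRing.maximalIdeal A := by
    have hs : Function.Surjective (Bialgebra.counitAlgHom k A) := by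
      intro c; exact ⟨algebraMap k A c, by simp⟩
    exact IsLocalRing.eq_maximalIdeal (RingHom.ker_isMaximal_of_surjective _ hs)
  have hnilel : ∀ a : A, Coalgebra.counit (R := k) (A := A) a = 0 → a ^ N = 0 := by
    intro a ha
    have hmem : a ∈ IsLocalRing.maximalIdeal A := by
      rw [← hker]
      exact RingHom.mem_ker.2 (by simpa using ha)
    have : a ^ N ∈ (IsLocalRing.maximalIdeal A) ^ N := Ideal.pow_mem_pow hmem N
    rw [← hjac, hN] at this
    simpa using this
  -- elements of ker φ are nilpotent
  have hnil : ∀ x : B ⊗[k] A, φ x = 0 → IsNilpotent x := by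
    intro x hx
    have hx' : LinearMap.lTensor B (Coalgebra.counit (R := k) (A := A)) x = 0 := by
      rw [hφdef] at hx
      simp only [LinearMap.comp_apply, LinearEquiv.coe_coe] at hx
      exact (LinearEquiv.map_eq_zero_iff _).mp hx
    have hexact : Function.Exact
        (LinearMap.ker (Coalgebra.counit (R := k) (A := A))).subtype
        (Coalgebra.counit (R := k) (A := A)) :=
      LinearMap.exact_subtype_ker_map _
    obtain ⟨y, hy⟩ := (lTensor_exact B hexact hsurjε x).mp hx'
    clear hx hx'
    subst hy
    induction y using TensorProduct.induction_on with
    | zero => simpa using (IsNilpotent.zero : IsNilpotent (0 : B ⊗[k] A))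
    | tmul b s =>
      refine ⟨N, ?_⟩
      have hs : (s : A) ^ N = 0 := hnilel s (LinearMap.mem_ker.mp s.2)
      rw [LinearMap.lTensor_tmul]
      simp [Algebra.TensorProduct.tmul_pow, hs]
    | add y₁ y₂ h₁ h₂ =>
      rw [map_add]
      exact Commute.isNilpotent_add (Commute.all _ _) h₁ h₂
  -- hence b ⊗ 1 - 1 ⊗ b is nilpotent in B ⊗ B
  have hzB : ∀ b : B, IsNilpotent ((b ⊗ₜ[k] (1 : B)) - ((1 : B) ⊗ₜ[k] b)) := by
    intro b
    have h0 : φ (g ((b ⊗ₜ[k] (1 : B)) - ((1 : B) ⊗ₜ[k] b))) = 0 := by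
      rw [map_sub, map_sub, hmulpure, hmulpure, mul_one, one_mul, sub_self]
    obtain ⟨n, hn⟩ := hnil _ h0
    refine ⟨n + 1, hgalois.1 ?_⟩
    rw [hgdef, galoisMap_pow, map_zero, ← hgdef]
    rw [pow_succ, hn, zero_mul]
  -- pass to the residue field K = B / m
  obtain ⟨m, hm⟩ := Ideal.exists_maximal B
  haveI := hm
  letI : Field (B ⧸ m) := Ideal.Quotient.field m
  let π : B →ₐ[k] B ⧸ m := Ideal.Quotient.mkₐ k m
  have hπs : Function.Surjective π := Ideal.Quotient.mkₐ_surjective k m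
  haveI : FiniteDimensional k (B ⧸ m) := Module.Finite.of_surjective π.toLinearMap hπs
  -- in K ⊗ K, a ⊗ 1 = 1 ⊗ a for every a
  have hzK : ∀ a : B ⧸ m, (a ⊗ₜ[k] (1 : B ⧸ m) : (B ⧸ m) ⊗[k] (B ⧸ m)) = (1 : B ⧸ m) ⊗ₜ[k] a := by
    intro a
    obtain ⟨b, rfl⟩ := hπs a
    set a := π b with ha
    set z : (B ⧸ m) ⊗[k] (B ⧸ m) := a ⊗ₜ[k] (1 : B ⧸ m) - (1 : B ⧸ m) ⊗ₜ[k] a with hzdef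
    have hz : IsNilpotent z := by
      have := (hzB b).map (Algebra.TensorProduct.map π π)
      simpa [map_sub, hzdef, ha] using this
    have hint : IsIntegral k a := IsIntegral.of_finite k a
    have hirr := minpoly.irreducible hint
    have hsep : (minpoly k a).Separable := PerfectField.separable_of_irreducible hirr
    have hder : (Polynomial.aeval a) (Polynomial.derivative (minpoly k a)) ≠ 0 :=
      hsep.aeval_derivative_ne_zero (minpoly.aeval k a)
    set f := (minpoly k a).map (algebraMap k ((B ⧸ m) ⊗[k] (B ⧸ m))) with hf
    set x : (B ⧸ m) ⊗[k] (B ⧸ m) := (1 : B ⧸ m) ⊗ₜ[k] a with hxdef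
    obtain ⟨c, hc⟩ := f.binomExpansion x z
    have hxz : x + z = a ⊗ₜ[k] (1 : B ⧸ m) := by rw [hzdef, hxdef]; ring
    have hfx : f.eval x = 0 := by
      rw [hf, Polynomial.eval_map, ← Polynomial.aeval_def]
      have hxe : x = (Algebra.TensorProduct.includeRight : (B ⧸ m) →ₐ[k] (B ⧸ m) ⊗[k] (B ⧸ m)) a := rfl
      rw [hxe, Polynomial.aeval_algHom_apply, minpoly.aeval, map_zero]
    have hfxz : f.eval (x + z) = 0 := by
      rw [hxz, hf, Polynomial.eval_map, ← Polynomial.aeval_def]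
      have hxe : (a ⊗ₜ[k] (1 : B ⧸ m) : (B ⧸ m) ⊗[k] (B ⧸ m))
          = (Algebra.TensorProduct.includeLeft : (B ⧸ m) →ₐ[k] (B ⧸ m) ⊗[k] (B ⧸ m)) a := rfl
      rw [hxe, Polynomial.aeval_algHom_apply, minpoly.aeval, map_zero]
    have hderx : IsUnit (f.derivative.eval x) := by
      rw [hf, Polynomial.derivative_map, Polynomial.eval_map, ← Polynomial.aeval_def]
      have hxe : x = (Algebra.TensorProduct.includeRight : (B ⧸ m) →ₐ[k] (B ⧸ m) ⊗[k] (B ⧸ m)) a := rfl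
      rw [hxe, Polynomial.aeval_algHom_apply]
      exact (hder.isUnit).map (Algebra.TensorProduct.includeRight : (B ⧸ m) →ₐ[k] (B ⧸ m) ⊗[k] (B ⧸ m))
    have h0 : z * (f.derivative.eval x + c * z) = 0 := by
      rw [hfx, hfxz, zero_add] at hc
      calc z * (f.derivative.eval x + c * z)
          = f.derivative.eval x * z + c * z ^ 2 := by ring
        _ = 0 := hc.symm
    have hcz : IsNilpotent (c * z) := by
      obtain ⟨n, hn⟩ := hz
      exact ⟨n, by rw [mul_pow, hn, mul_zero]⟩
    have hu : IsUnit (f.derivative.eval x + c * z) :=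
      hcz.isUnit_add_left_of_commute hderx (Commute.all _ _)
    have hz0 : z = 0 := by rwa [IsUnit.mul_left_eq_zero hu] at h0
    have := sub_eq_zero.mp (hzdef ▸ hz0)
    exact this
  -- hence K ⊗ K is spanned by elements a ⊗ 1
  have hsurjL : ∀ y : (B ⧸ m) ⊗[k] (B ⧸ m), ∃ a : B ⧸ m, (a ⊗ₜ[k] (1 : B ⧸ m) : (B ⧸ m) ⊗[k] (B ⧸ m)) = y := by
    intro y
    induction y using TensorProduct.induction_on with
    | zero => exact ⟨0, by simp⟩
    | tmul a b =>
      refine ⟨a * b, ?_⟩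
      have h1 : (a ⊗ₜ[k] b : (B ⧸ m) ⊗[k] (B ⧸ m)) = (a ⊗ₜ[k] (1 : B ⧸ m)) * ((1 : B ⧸ m) ⊗ₜ[k] b) := by
        rw [Algebra.TensorProduct.tmul_mul_tmul, mul_one, one_mul]
      rw [h1, ← hzK b, Algebra.TensorProduct.tmul_mul_tmul, mul_one]
    | add y₁ y₂ h₁ h₂ =>
      obtain ⟨a₁, e₁⟩ := h₁
      obtain ⟨a₂, e₂⟩ := h₂
      exact ⟨a₁ + a₂, by rw [TensorProduct.add_tmul, e₁, e₂]⟩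
  -- dimension count : finrank K = 1
  have hLs : Function.Surjective ((TensorProduct.mk k (B ⧸ m) (B ⧸ m)).flip 1) := by
    intro y
    obtain ⟨a, ha⟩ := hsurjL y
    exact ⟨a, ha⟩
  have hrange : LinearMap.range ((TensorProduct.mk k (B ⧸ m) (B ⧸ m)).flip 1) = ⊤ :=
    LinearMap.range_eq_top.mpr hLs
  have hd : Module.finrank k ((B ⧸ m) ⊗[k] (B ⧸ m)) ≤ Module.finrank k (B ⧸ m) := by
    have h1 := LinearMap.finrank_range_le ((TensorProduct.mk k (B ⧸ m) (B ⧸ m)).flip 1)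
    rwa [hrange, finrank_top] at h1
  have htensor : Module.finrank k ((B ⧸ m) ⊗[k] (B ⧸ m)) = Module.finrank k (B ⧸ m) * Module.finrank k (B ⧸ m) :=
    Module.finrank_tensorProduct
  have hpos : 0 < Module.finrank k (B ⧸ m) := Module.finrank_pos
  have hone : Module.finrank k (B ⧸ m) = 1 := by
    rw [htensor] at hd
    have h1 : Module.finrank k (B ⧸ m) ≤ 1 :=
      Nat.le_of_mul_le_mul_left (by simpa [mul_one] using hd) hpos
    omega
  have hbij : Function.Bijective (algebraMap k (B ⧸ m)) :=
    Algebra.bijective_algebraMap_iff.mpr (Subalgebra.bot_eq_top_of_finrank_eq_one hone).symm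
  exact ⟨((AlgEquiv.ofBijective (Algebra.ofId k (B ⧸ m)) hbij).symm : (B ⧸ m) →ₐ[k] k).comp π⟩
end
end
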